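/- For n ≥ 1, if b is a nonempty border of M_{2n+2}, then b ends in 0 and there is a word a with φ(a)·0 = b, and a is a border of M_{2n+1}. -/

import Mathlib

/-- The Fibonacci morphism: `false` (=0) ↦ 01, `true` (=1) ↦ 0. -/
def phi (w : List Bool) : List Bool :=
  w.flatMap (fun b => if b then [false] else [false, true])

/-- The Fibonacci words: f₁ = 1, f₂ = 0, f_{n+2} = f_{n+1} f_n. -/
def fw : ℕ → List Bool
  | 0 => []
  | 1 => [true]
  | 2 => [false]
  | (n+3) => fw (n+2) ++ fw (n+1)

/-- Palindromic prefix: f_n with its last two letters removed. -/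
def pw (n : ℕ) : List Bool := (fw n).dropLast.dropLast

/-- Minimal forbidden words of the Fibonacci word:
`M_{2n+1} = 1 p_{2n+1} 1`, `M_{2n+2} = 0 p_{2n+2} 0`. -/
def Mw (n : ℕ) : List Bool :=
  if n % 2 = 0 then false :: (pw n ++ [false]) else true :: (pw n ++ [true])

/-- Correlation bit: `corr u v k` holds iff `C_{u,v}[k] = 1`. -/
def corr {α : Type*} (u v : List α) (k : ℕ) : Prop :=
  ∀ i j : ℕ, i < u.length → j < v.length → i = j + k → u[i]? = v[j]?

/-- A border of a word is both a prefix and a suffix. -/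
def IsBorder {α : Type*} (b w : List α) : Prop := b <+: w ∧ b <:+ w

/-- The set of nonempty borders of `M_n`. -/
def Bset (n : ℕ) : Set (List Bool) := {b | b ≠ [] ∧ IsBorder b (Mw n)}

open scoped Classical in
/-- The correlation polynomial `C_{u,v}(z) = ∑_{k<|u|} C_{u,v}[k] z^{|u|-1-k}`. -/
noncomputable def corrPoly (u v : List Bool) : Polynomial ℤ :=
  ∑ k ∈ Finset.range u.length,
    if corr u v k then Polynomial.X ^ (u.length - 1 - k) else 0

open scoped Classical in
/-- The nonempty borders of `w`, as a finset. -/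
noncomputable def borderFinset (w : List Bool) : Finset (List Bool) :=
  ((Finset.range (w.length + 1)).image (fun k => w.take k)).filter
    (fun b => b ≠ [] ∧ b <:+ w)

section Aux

lemma phi_append (u v : List Bool) : phi (u ++ v) = phi u ++ phi v :=
  List.flatMap_append

@[simp] lemma phi_nil : phi [] = [] := rfl
@[simp] lemma phi_cons_true (t : List Bool) : phi (true :: t) = false :: phi t := rfl
@[simp] lemma phi_cons_false (t : List Bool) : phi (false :: t) = false :: true :: phi t := rfl

lemma phi_head : ∀ t : List Bool, phi t = [] ∨ ∃ r, phi t = false :: r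
  | [] => Or.inl rfl
  | true :: t => Or.inr ⟨phi t, rfl⟩
  | false :: t => Or.inr ⟨true :: phi t, rfl⟩

lemma phi_inj : ∀ a b : List Bool, phi a = phi b → a = b
  | [], [], _ => rfl
  | [], true :: t, h => by simp at h
  | [], false :: t, h => by simp at h
  | true :: t, [], h => by simp at h
  | false :: t, [], h => by simp at h
  | true :: t, true :: s, h => by
      simp only [phi_cons_true, List.cons.injEq, true_and] at h
      rw [phi_inj t s h]
  | false :: t, false :: s, h => by
      simp only [phi_cons_false, List.cons.injEq, true_and] at h
      rw [phi_inj t s h]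
  | true :: t, false :: s, h => by
      simp only [phi_cons_true, phi_cons_false, List.cons.injEq, true_and] at h
      rcases phi_head t with h' | ⟨r, h'⟩ <;> rw [h'] at h <;> simp at h
  | false :: t, true :: s, h => by
      simp only [phi_cons_true, phi_cons_false, List.cons.injEq, true_and] at h
      rcases phi_head s with h' | ⟨r, h'⟩ <;> rw [h'] at h <;> simp at h

lemma getLast?_tail {b' : List Bool} (x : Bool) (hb' : b' ≠ [])
    (hl : (x :: b').getLast? = some false) : b'.getLast? = some false := by
  rwa [show x :: b' = [x] ++ b' from rfl, List.getLast?_append_of_ne_nil _ hb'] at hl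

/-- Prefix decoding lemma. -/
lemma decode_prefix : ∀ (w b : List Bool), b ≠ [] → b.getLast? = some false →
    b <+: phi w ++ [false] → ∃ a, a <+: w ∧ phi a ++ [false] = b
  | [], b, hne, _hl, hpre => by
      refine ⟨[], List.nil_prefix, ?_⟩
      obtain ⟨t, ht⟩ := hpre
      match b, hne with
      | [x], _ =>
        simp only [phi_nil, List.nil_append, List.cons_append, List.cons.injEq] at ht
        obtain ⟨rfl, h2⟩ := ht
        rfl
      | x :: y :: b', _ => simp at ht
  | true :: w, b, hne, hl, hpre => by
      match b, hne with
      | x :: b', _ =>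
      rw [show phi (true :: w) ++ [false] = false :: (phi w ++ [false]) from rfl,
        List.cons_prefix_cons] at hpre
      obtain ⟨rfl, hpre'⟩ := hpre
      rcases eq_or_ne b' [] with rfl | hb'
      · exact ⟨[], List.nil_prefix, rfl⟩
      · obtain ⟨a, ha, hphi⟩ := decode_prefix w b' hb' (getLast?_tail false hb' hl) hpre'
        exact ⟨true :: a, List.cons_prefix_cons.mpr ⟨rfl, ha⟩, by rw [phi_cons_true]; simp [hphi]⟩
  | false :: w, b, hne, hl, hpre => by
      match b, hne with
      | x :: b', _ =>
      rw [show phi (false :: w) ++ [false] = false :: (true :: (phi w ++ [false])) from rfl,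
        List.cons_prefix_cons] at hpre
      obtain ⟨rfl, hpre'⟩ := hpre
      rcases eq_or_ne b' [] with rfl | hb'
      · exact ⟨[], List.nil_prefix, rfl⟩
      · match b', hb' with
        | y :: b'', _ =>
        rw [List.cons_prefix_cons] at hpre'
        obtain ⟨rfl, hpre''⟩ := hpre'
        rcases eq_or_ne b'' [] with rfl | hb''
        · simp at hl
        · have hl' := getLast?_tail true hb'' (getLast?_tail false (by simp) hl)
          obtain ⟨a, ha, hphi⟩ := decode_prefix w b'' hb'' hl' hpre''
          exact ⟨false :: a, List.cons_prefix_cons.mpr ⟨rfl, ha⟩,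
            by rw [phi_cons_false]; simp [hphi]⟩

/-- Suffix decoding lemma. -/
lemma decode_suffix : ∀ (w b : List Bool), b ≠ [] → b.head? = some false →
    b <:+ phi w ++ [false] → ∃ a, a <:+ w ∧ phi a ++ [false] = b
  | [], b, hne, _hh, hsuf => by
      refine ⟨[], List.nil_suffix, ?_⟩
      simp only [phi_nil, List.nil_append, List.suffix_cons_iff, List.suffix_nil] at hsuf
      rcases hsuf with rfl | rfl
      · rfl
      · exact absurd rfl hne
  | true :: w, b, hne, hh, hsuf => by
      rw [show phi (true :: w) ++ [false] = false :: (phi w ++ [false]) from rfl,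
        List.suffix_cons_iff] at hsuf
      rcases hsuf with rfl | hsuf
      · exact ⟨true :: w, List.suffix_refl _, rfl⟩
      · obtain ⟨a, ha, hphi⟩ := decode_suffix w b hne hh hsuf
        exact ⟨a, ha.trans (List.suffix_cons _ _), hphi⟩
  | false :: w, b, hne, hh, hsuf => by
      rw [show phi (false :: w) ++ [false] = false :: (true :: (phi w ++ [false])) from rfl,
        List.suffix_cons_iff] at hsuf
      rcases hsuf with rfl | hsuf
      · exact ⟨false :: w, List.suffix_refl _, rfl⟩
      · rw [List.suffix_cons_iff] at hsuf
        rcases hsuf with rfl | hsuf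
        · simp at hh
        · obtain ⟨a, ha, hphi⟩ := decode_suffix w b hne hh hsuf
          exact ⟨a, ha.trans (List.suffix_cons _ _), hphi⟩

lemma phi_fw : ∀ k, phi (fw (k + 1)) = fw (k + 2)
  | 0 => rfl
  | 1 => rfl
  | (n + 2) => by
      rw [show fw (n + 3) = fw (n + 2) ++ fw (n + 1) from rfl, phi_append,
        phi_fw (n + 1), phi_fw n]
      rfl

lemma fw_ends : ∀ m, ∃ u v, fw (2*m+3) = u ++ [false, true] ∧ fw (2*m+4) = v ++ [true, false]
  | 0 => ⟨[], [false], rfl, rfl⟩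
  | (m + 1) => by
      obtain ⟨u, v, hu, hv⟩ := fw_ends m
      refine ⟨fw (2*m+4) ++ u, fw (2*m+5) ++ v, ?_, ?_⟩
      · rw [show 2*(m+1)+3 = (2*m+3)+2 from by ring,
          show fw ((2*m+3)+2) = fw (2*m+4) ++ fw (2*m+3) from rfl, hu, List.append_assoc]
      · rw [show 2*(m+1)+4 = (2*m+4)+2 from by ring,
          show fw ((2*m+4)+2) = fw (2*m+5) ++ fw (2*m+4) from rfl, hv, List.append_assoc]

lemma pw_concat (u : List Bool) (x y : Bool) (k : ℕ) (h : fw k = u ++ [x, y]) :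
    pw k = u ∧ fw k = pw k ++ [x, y] := by
  have : pw k = u := by
    rw [pw, h, show u ++ [x, y] = (u ++ [x]) ++ [y] from by simp, List.dropLast_concat,
      List.dropLast_concat]
  exact ⟨this, by rw [this, h]⟩

/-- The key structural identity: `M_{2n+2} = φ(M_{2n+1}) ++ [0]` for `n ≥ 1`. -/
lemma Mw_even_eq (m : ℕ) : Mw (2*(m+1)+2) = phi (Mw (2*(m+1)+1)) ++ [false] := by
  obtain ⟨u, v, hu, hv⟩ := fw_ends m
  obtain ⟨hpu, hfu⟩ := pw_concat u false true (2*m+3) hu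
  obtain ⟨hpv, hfv⟩ := pw_concat v true false (2*m+4) hv
  have key : v = phi u ++ [false] := by
    have h1 : phi (fw (2*m+3)) = fw (2*m+4) := phi_fw (2*m+2)
    rw [hu, hv, phi_append] at h1
    have h2 : phi [false, true] = [false, true, false] := rfl
    rw [h2] at h1
    have h3 : (phi u ++ [false]) ++ [true, false] = v ++ [true, false] := by
      simpa using h1
    exact (List.append_cancel_right h3).symm
  have e1 : 2*(m+1)+2 = 2*m+4 := by ring
  have e2 : 2*(m+1)+1 = 2*m+3 := by ring
  rw [e1, e2, Mw, Mw, if_pos (by omega), if_neg (by omega), hpv, hpu, key]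
  simp [phi_append]

end Aux

theorem stmt13 (n : ℕ) (hn : 1 ≤ n) (b : List Bool) (hne : b ≠ [])
    (hb : IsBorder b (Mw (2*n+2))) :
    b.getLast hne = false ∧
    ∃ a : List Bool, phi a ++ [false] = b ∧ IsBorder a (Mw (2*n+1)) := by
  obtain ⟨m, rfl⟩ : ∃ m, n = m + 1 := ⟨n - 1, by omega⟩
  have key := Mw_even_eq m
  obtain ⟨hpre, hsuf⟩ := hb
  -- b ends with false
  have hlast : b.getLast? = some false := by
    obtain ⟨t, ht⟩ := hsuf
    have : (t ++ b).getLast? = b.getLast? := List.getLast?_append_of_ne_nil t hne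
    rw [ht, key, List.getLast?_append_of_ne_nil _ (by simp)] at this
    simpa using this.symm
  have hgl : b.getLast hne = false := by
    rw [List.getLast?_eq_getLast hne] at hlast
    simpa using hlast
  refine ⟨hgl, ?_⟩
  -- b starts with false
  have hhead : b.head? = some false := by
    match b, hne with
    | x :: b', _ =>
      rw [Mw, if_pos (by omega), List.cons_prefix_cons] at hpre
      rw [hpre.1]
      rfl
  rw [key] at hpre hsuf
  obtain ⟨a, hasuf, haphi⟩ := decode_suffix _ b hne hhead hsuf
  obtain ⟨a', hapre, haphi'⟩ := decode_prefix _ b hne hlast hpre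
  have : a' = a := phi_inj _ _ (List.append_cancel_right (haphi'.trans haphi.symm))
  exact ⟨a, haphi, this ▸ hapre, hasuf⟩
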